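/- arXiv:2603.25971 — 4 statements merged into one kernel-verified Lean document; each statement's English description precedes it below -/
import Mathlib

section
/- Fix an arm w ∈ {0,1} and N units with fixed distinct potential event times 0 < t₁ < t₂ < ... < t_N, fixed potential outcomes y₁, ..., y_N ∈ ℝ, and fixed propensities π₁, ..., π_N ∈ (0,1). Let W₁, ..., W_N be independent random variables with P(Wᵢ = w) = πᵢ, set Zᵢ = 1[Wᵢ = w]/πᵢ − 1, and for each unit let the augmentation be a deterministic function mᵢ : [0,∞) → ℝ with reward process rᵢ(t) = yᵢ·1[tᵢ ≤ t] and residual eᵢ(t) = rᵢ(t) − mᵢ(t). Define the estimation error process M_t = Σᵢ Zᵢ·eᵢ(t) and the single-arm filtration (F_t)_{t≥0} where F_t = σ({Wᵢ : tᵢ ≤ t}). Then (M_t)_{t≥0} is adapted to (F_t) and is a martingale with respect to (F_t) if and only if for every i: mᵢ(t) = 0 for all t < tᵢ and mᵢ is constant on [tᵢ, ∞). -/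
open MeasureTheory ProbabilityTheory
open scoped NNReal

/-- Fix an arm and `N` units with fixed distinct positive potential
event times `t 1 < ... < t N`, fixed outcomes `y i`, and propensities
`π i ∈ (0,1)`. Treatment indicators are modeled by independent events `A i` with
`μ (A i) = π i`; `Z i = 1[A i]/π i - 1`. With deterministic augmentations
`m i : ℝ≥0 → ℝ`, reward `r i s = y i · 1[t i ≤ s]` and residual
`e i s = r i s - m i s`, the estimation error `M s = ∑ i, Z i · e i s` is
adapted to the single-arm filtration `F s = σ({A i : t i ≤ s})` and is a
martingale w.r.t. it iff, for every `i`, `m i` vanishes before `t i` and is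
constant on `[t i, ∞)`. -/
theorem single_arm_martingale_iff_event_time_augmentation
    {Ω : Type*} {mΩ : MeasurableSpace Ω} (μ : Measure Ω) [IsProbabilityMeasure μ]
    (N : ℕ) (t : Fin N → ℝ≥0) (ht0 : ∀ i, 0 < t i) (htmono : StrictMono t)
    (y : Fin N → ℝ) (π : Fin N → ℝ) (hπ : ∀ i, π i ∈ Set.Ioo (0 : ℝ) 1)
    (A : Fin N → Set Ω) (hA : ∀ i, MeasurableSet (A i))
    (hAπ : ∀ i, μ (A i) = ENNReal.ofReal (π i))
    (hindep : iIndepSet A μ)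
    (m : Fin N → ℝ≥0 → ℝ)
    (F : Filtration ℝ≥0 mΩ)
    (hF : ∀ s : ℝ≥0,
      F s = MeasurableSpace.generateFrom {u | ∃ i, t i ≤ s ∧ u = A i}) :
    (Adapted F (fun s ω => ∑ i,
        ((A i).indicator (fun _ => (1 : ℝ)) ω / π i - 1)
          * (y i * (if t i ≤ s then (1 : ℝ) else 0) - m i s)) ∧
     Martingale (fun s ω => ∑ i,
        ((A i).indicator (fun _ => (1 : ℝ)) ω / π i - 1)
          * (y i * (if t i ≤ s then (1 : ℝ) else 0) - m i s)) F μ)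
    ↔ (∀ i, (∀ s, s < t i → m i s = 0) ∧ (∀ s, t i ≤ s → m i s = m i (t i))) := by
  classical
  set Z : Fin N → Ω → ℝ :=
    fun i ω => (A i).indicator (fun _ => (1 : ℝ)) ω / π i - 1 with hZdef
  set c : Fin N → ℝ≥0 → ℝ :=
    fun i s => y i * (if t i ≤ s then (1 : ℝ) else 0) - m i s with hcdef
  have hπ0 : ∀ i, (0 : ℝ) < π i := fun i => (hπ i).1
  have hπ1 : ∀ i, π i < 1 := fun i => (hπ i).2
  have hπne : ∀ i, π i ≠ 0 := fun i => (hπ0 i).ne'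
  have h1π : ∀ i, (1 : ℝ) - π i ≠ 0 := fun i => sub_ne_zero.2 (hπ1 i).ne'
  have hμA : ∀ i, (μ (A i)).toReal = π i := fun i => by
    rw [hAπ i, ENNReal.toReal_ofReal (hπ0 i).le]
  -- σ-algebra facts
  have hgen_le : ∀ i, MeasurableSpace.generateFrom {A i} ≤ mΩ := by
    intro i
    refine MeasurableSpace.generateFrom_le ?_
    rintro u hu
    rw [Set.mem_singleton_iff] at hu
    subst hu; exact hA i
  have hZmeasG : ∀ i, Measurable[MeasurableSpace.generateFrom {A i}] (Z i) := by
    intro i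
    have hAi : MeasurableSet[MeasurableSpace.generateFrom {A i}] (A i) :=
      MeasurableSpace.measurableSet_generateFrom rfl
    exact ((measurable_const.indicator hAi).div_const _).sub measurable_const
  have hZmeas : ∀ i, Measurable (Z i) :=
    fun i => (hZmeasG i).mono (hgen_le i) le_rfl
  have hZint : ∀ i, Integrable (Z i) μ := by
    intro i
    have h1 : Integrable ((A i).indicator fun _ => (1 : ℝ)) μ :=
      (integrable_const 1).indicator (hA i)
    exact (h1.div_const _).sub (integrable_const 1)
  have hZ0 : ∀ i, ∫ ω, Z i ω ∂μ = 0 := by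
    intro i
    have h1 : Integrable ((A i).indicator fun _ => (1 : ℝ)) μ :=
      (integrable_const 1).indicator (hA i)
    rw [hZdef]
    simp only
    rw [integral_sub (h1.div_const _) (integrable_const 1), integral_div,
      integral_indicator_const _ (hA i), integral_const]
    simp [hμA i, measureReal_def, div_self (hπne i)]
  -- pairwise intersection measure
  have hmeas_inter : ∀ i j, i ≠ j →
      (μ (A i ∩ A j)).toReal = π i * π j := by
    intro i j hij
    have h := hindep.meas_biInter ({i, j} : Finset (Fin N))
    have h2 : (⋂ k ∈ ({i, j} : Finset (Fin N)), A k) = A i ∩ A j := by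
      simp [Set.biInter_insert]
    have h3 : (∏ k ∈ ({i, j} : Finset (Fin N)), μ (A k)) = μ (A i) * μ (A j) := by
      rw [Finset.prod_insert (by simpa using hij), Finset.prod_singleton]
    rw [h2, h3] at h
    rw [h, ENNReal.toReal_mul, hμA i, hμA j]
  -- set integrals of Z
  have hZsetInt : ∀ i j, ∫ ω in A j, Z i ω ∂μ = if i = j then 1 - π i else 0 := by
    intro i j
    have h1 : Integrable ((A i).indicator fun _ => (1 : ℝ)) μ :=
      (integrable_const 1).indicator (hA i)
    rw [hZdef]
    simp only
    rw [integral_sub ((h1.div_const _).integrableOn) (integrable_const 1).integrableOn,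
      integral_div, setIntegral_indicator (hA i), setIntegral_const, setIntegral_const]
    by_cases h : i = j
    · subst h
      simp [Set.inter_self, hμA i, measureReal_def, div_self (hπne i)]
    · rw [if_neg h, measureReal_def, Set.inter_comm, hmeas_inter i j h, measureReal_def, hμA j]
      simp only [smul_eq_mul, mul_one]
      rw [mul_div_cancel_left₀ _ (hπne i), sub_self]
  -- integrability and integral of M s
  have hMint : ∀ s, Integrable (fun ω => ∑ i, Z i ω * c i s) μ :=
    fun s => integrable_finset_sum _ (fun i _ => (hZint i).mul_const _)
  have hMint0 : ∀ s, ∫ ω, (∑ i, Z i ω * c i s) ∂μ = 0 := by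
    intro s
    rw [integral_finset_sum _ (fun i _ => (hZint i).mul_const _)]
    refine Finset.sum_eq_zero fun i _ => ?_
    rw [integral_mul_const, hZ0 i, zero_mul]
  -- Claim A : set integral of M s over A j
  have hMsetInt : ∀ j s, ∫ ω in A j, (∑ i, Z i ω * c i s) ∂μ = c j s * (1 - π j) := by
    intro j s
    rw [integral_finset_sum _ (fun i _ => ((hZint i).mul_const _).integrableOn)]
    rw [Finset.sum_eq_single j]
    · rw [integral_mul_const, hZsetInt j j, if_pos rfl, mul_comm]
    · intro i _ hij
      rw [integral_mul_const, hZsetInt i j, if_neg hij, zero_mul]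
    · intro h; exact absurd (Finset.mem_univ j) h
  -- F s facts
  have hAF : ∀ i (s : ℝ≥0), t i ≤ s → MeasurableSet[F s] (A i) := by
    intro i s h
    rw [hF s]
    exact MeasurableSpace.measurableSet_generateFrom ⟨i, h, rfl⟩
  have hgenF : ∀ i (s : ℝ≥0), t i ≤ s → MeasurableSpace.generateFrom {A i} ≤ F s := by
    intro i s h
    refine MeasurableSpace.generateFrom_le ?_
    rintro u hu
    rw [Set.mem_singleton_iff] at hu
    subst hu; exact hAF i s h
  -- independence of F s and σ(A i) when s < t i
  have hindepFs : ∀ i (s : ℝ≥0), s < t i →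
      Indep (F s) (MeasurableSpace.generateFrom {A i}) μ := by
    intro i s hs
    have hdisj : Disjoint {j | t j ≤ s} ({i} : Set (Fin N)) := by
      rw [Set.disjoint_singleton_right]
      exact fun h => absurd h (not_le.2 hs)
    have h := hindep.indep_generateFrom_of_disjoint hA {j | t j ≤ s} {i} hdisj
    have h1 : {u | ∃ n ∈ {j | t j ≤ s}, A n = u} = {u | ∃ i, t i ≤ s ∧ u = A i} := by
      ext u
      constructor
      · rintro ⟨n, hn, rfl⟩; exact ⟨n, hn, rfl⟩
      · rintro ⟨n, hn, rfl⟩; exact ⟨n, hn, rfl⟩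
    have h2 : {u | ∃ k ∈ ({i} : Set (Fin N)), A k = u} = {A i} := by
      ext u; simp [eq_comm]
    rw [h1, h2] at h
    rw [hF s]
    exact h
  constructor
  · -- forward direction
    rintro ⟨hadapt, hmart⟩
    intro i
    constructor
    · -- m i s = 0 for s < t i
      intro s hs
      have hce := condExp_indep_eq (F.le s) (hgen_le i) (hadapt s).stronglyMeasurable (hindepFs i s hs)
      have hset : ∫ ω in A i, (∑ j, Z j ω * c j s) ∂μ = 0 := by
        have h1 : ∫ ω in A i, (∑ j, Z j ω * c j s) ∂μ
            = ∫ ω in A i, (μ[(fun ω => ∑ j, Z j ω * c j s)|MeasurableSpace.generateFrom {A i}]) ω ∂μ :=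
          (setIntegral_condExp (hgen_le i) (hMint s)
            (MeasurableSpace.measurableSet_generateFrom rfl)).symm
        rw [h1,
          setIntegral_congr_ae (hA i) (hce.mono fun ω h _ => h),
          setIntegral_const, hMint0 s, smul_zero]
      rw [hMsetInt i s] at hset
      have hc0 : c i s = 0 := by
        rcases mul_eq_zero.1 hset with h | h
        · exact h
        · exact absurd h (h1π i)
      rw [hcdef] at hc0
      simp only [if_neg (not_le.2 hs), mul_zero, zero_sub, neg_eq_zero] at hc0
      exact hc0
    · -- m i s = m i (t i) for t i ≤ s
      intro s hs
      have h := hmart.setIntegral_eq hs (hAF i (t i) le_rfl)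
      rw [hMsetInt i (t i), hMsetInt i s] at h
      have hcc : c i (t i) = c i s := mul_right_cancel₀ (h1π i) h
      rw [hcdef] at hcc
      simp only [if_pos le_rfl, if_pos hs, mul_one] at hcc
      linarith
  · -- reverse direction
    intro hm
    have hc_lt : ∀ i (s : ℝ≥0), ¬ t i ≤ s → c i s = 0 := by
      intro i s h
      rw [hcdef]
      simp only [if_neg h, mul_zero, zero_sub, neg_eq_zero]
      exact (hm i).1 s (not_le.1 h)
    have hc_ge : ∀ i (s : ℝ≥0), t i ≤ s → c i s = y i - m i (t i) := by
      intro i s h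
      rw [hcdef]
      simp only [if_pos h, mul_one]
      rw [(hm i).2 s h]
    have hadapt : StronglyAdapted F (fun s ω => ∑ i, Z i ω * c i s) := by
      intro s
      refine Finset.stronglyMeasurable_fun_sum _ fun i _ => ?_
      by_cases h : t i ≤ s
      · exact (((hZmeasG i).mono (hgenF i s h) le_rfl).mul_const _).stronglyMeasurable
      · have he : (fun ω => Z i ω * c i s) = fun _ => (0 : ℝ) := by
          funext ω; rw [hc_lt i s h, mul_zero]
        rw [he]
        exact stronglyMeasurable_const
    refine ⟨hadapt.adapted, hadapt, ?_⟩
    intro s s' hss'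
    have hfun : (fun ω => ∑ i, Z i ω * c i s') = ∑ i, (fun ω => Z i ω * c i s') := by
      funext ω; rw [Finset.sum_apply]
    have hsum := condExp_finsetSum (s := Finset.univ)
      (f := fun i ω => Z i ω * c i s')
      (fun i _ => (hZint i).mul_const _) (m := F s) (μ := μ)
    have hterm : ∀ i : Fin N,
        μ[(fun ω => Z i ω * c i s')|F s] =ᵐ[μ] fun ω => Z i ω * c i s := by
      intro i
      by_cases h : t i ≤ s
      · have hmeas : StronglyMeasurable[F s] fun ω => Z i ω * c i s' :=
          (((hZmeasG i).mono (hgenF i s h) le_rfl).mul_const _).stronglyMeasurable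
        rw [condExp_of_stronglyMeasurable (F.le s) hmeas ((hZint i).mul_const _)]
        have : c i s' = c i s := by
          rw [hc_ge i s' (h.trans hss'), hc_ge i s h]
        rw [this]
      · by_cases h' : t i ≤ s'
        · have hce := condExp_indep_eq (f := fun ω => Z i ω * c i s')
            (hgen_le i) (F.le s)
            (((hZmeasG i).mul_const (c i s')).stronglyMeasurable)
            ((hindepFs i s (not_le.1 h)).symm)
          refine hce.trans ?_
          have h0 : ∫ ω, Z i ω * c i s' ∂μ = 0 := by
            rw [integral_mul_const, hZ0 i, zero_mul]
          rw [h0]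
          have he : (fun ω => Z i ω * c i s) = fun _ => (0 : ℝ) := by
            funext ω; rw [hc_lt i s h, mul_zero]
          rw [he]
        · have he' : (fun ω => Z i ω * c i s') = fun _ => (0 : ℝ) := by
            funext ω; rw [hc_lt i s' h', mul_zero]
          have he : (fun ω => Z i ω * c i s) = fun _ => (0 : ℝ) := by
            funext ω; rw [hc_lt i s h, mul_zero]
          rw [he', he]
          exact Filter.EventuallyEq.of_eq (condExp_const (F.le s) (0 : ℝ))
    calc μ[(fun ω => ∑ i, Z i ω * c i s')|F s]
        =ᵐ[μ] ∑ i, μ[(fun ω => Z i ω * c i s')|F s] := by rw [hfun]; exact hsum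
      _ =ᵐ[μ] fun ω => ∑ i, Z i ω * c i s := by
          have hall : ∀ᵐ ω ∂μ, ∀ i : Fin N,
              (μ[(fun ω' => Z i ω' * c i s')|F s]) ω = Z i ω * c i s :=
            ae_all_iff.2 hterm
          filter_upwards [hall] with ω hω
          rw [Finset.sum_apply]
          exact Finset.sum_congr rfl fun i _ => hω i
end

section
/- Let units i = 1, ..., N have independent treatment assignments Wᵢ ∈ {0,1} with πᵢ(1) = P(Wᵢ = 1) ∈ (0,1) and πᵢ(0) = 1 − πᵢ(1). For two fixed times s ≤ t, let e_{is}(w), e_{it}(w) ∈ ℝ be fixed residuals and m_{is}(w), m_{it}(w) ∈ ℝ fixed augmentations for each unit i and arm w ∈ {0,1}. Define Δ̂_{iu} = (m_{iu}(1) + (1[Wᵢ = 1]/πᵢ(1))·e_{iu}(1)) − (m_{iu}(0) + (1[Wᵢ = 0]/πᵢ(0))·e_{iu}(0)) for u ∈ {s, t}, and Δ̂_u = Σᵢ Δ̂_{iu}. Then Cov(Δ̂_s, Δ̂_t) = Σᵢ [ e_{is}(1)e_{it}(1)/πᵢ(1) + e_{is}(0)e_{it}(0)/πᵢ(0) − (e_{is}(1)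 − e_{is}(0))·(e_{it}(1) − e_{it}(0)) ]. -/
open MeasureTheory ProbabilityTheory

theorem aux_cov
    {Ω : Type*} [MeasurableSpace Ω] (μ : Measure Ω) [IsProbabilityMeasure μ]
    (N : ℕ) (π : Fin N → ℝ) (hπ : ∀ i, π i ∈ Set.Ioo (0 : ℝ) 1)
    (A : Fin N → Set Ω) (hA : ∀ i, MeasurableSet (A i))
    (hAπ : ∀ i, μ (A i) = ENNReal.ofReal (π i))
    (hindep : iIndepSet A μ)
    (a b c d : Fin N → ℝ) :
    (∫ ω, (∑ i, (b i + a i * (A i).indicator (fun _ => (1 : ℝ)) ω))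
        * (∑ i, (d i + c i * (A i).indicator (fun _ => (1 : ℝ)) ω)) ∂μ)
    - (∫ ω, ∑ i, (b i + a i * (A i).indicator (fun _ => (1 : ℝ)) ω) ∂μ)
      * (∫ ω, ∑ i, (d i + c i * (A i).indicator (fun _ => (1 : ℝ)) ω) ∂μ)
    = ∑ i, a i * c i * (π i * (1 - π i)) := by
  have hint : ∀ i, Integrable (fun ω => (A i).indicator (fun _ => (1 : ℝ)) ω) μ :=
    fun i => (integrable_const (1 : ℝ)).indicator (hA i)
  have hE : ∀ i, ∫ ω, (A i).indicator (fun _ => (1 : ℝ)) ω ∂μ = π i := by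
    intro i
    simp only [show (fun _ : Ω => (1:ℝ)) = (1 : Ω → ℝ) from rfl,
      integral_indicator_one (hA i), measureReal_def, hAπ i, ENNReal.toReal_ofReal (hπ i).1.le]
  have hinter : ∀ i j, (fun ω => (A i).indicator (fun _ => (1 : ℝ)) ω
      * (A j).indicator (fun _ => (1 : ℝ)) ω)
      = fun ω => (A i ∩ A j).indicator (fun _ => (1 : ℝ)) ω := by
    intro i j; funext ω
    by_cases h1 : ω ∈ A i <;> by_cases h2 : ω ∈ A j <;>
      simp [Set.indicator_of_mem, Set.indicator_of_notMem, h1, h2, Set.mem_inter_iff]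
  have hint2 : ∀ i j, Integrable (fun ω => (A i).indicator (fun _ => (1 : ℝ)) ω
      * (A j).indicator (fun _ => (1 : ℝ)) ω) μ := by
    intro i j
    rw [hinter i j]
    exact (integrable_const (1 : ℝ)).indicator ((hA i).inter (hA j))
  have hE2 : ∀ i j, ∫ ω, (A i).indicator (fun _ => (1 : ℝ)) ω
      * (A j).indicator (fun _ => (1 : ℝ)) ω ∂μ
      = if i = j then π i else π i * π j := by
    intro i j
    rw [hinter i j]
    rw [show (∫ ω, (A i ∩ A j).indicator (fun _ => (1:ℝ)) ω ∂μ)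
        = (μ (A i ∩ A j)).toReal from integral_indicator_one ((hA i).inter (hA j))]
    by_cases h : i = j
    · subst h
      simp [hAπ i, ENNReal.toReal_ofReal (hπ i).1.le]
    · have hmeas : μ (A i ∩ A j) = μ (A i) * μ (A j) := by
        have h2 := hindep.meas_biInter ({i, j} : Finset (Fin N))
        rw [Finset.prod_pair h] at h2
        simpa [Set.biInter_pair] using h2
      simp [h, hmeas, hAπ, ENNReal.toReal_mul,
        ENNReal.toReal_ofReal (hπ i).1.le, ENNReal.toReal_ofReal (hπ j).1.le]
  have hfint : ∀ (co cf : Fin N → ℝ) i,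
      Integrable (fun ω => co i + cf i * (A i).indicator (fun _ => (1 : ℝ)) ω) μ :=
    fun co cf i => (integrable_const _).add ((hint i).const_mul _)
  have hsum1 : ∀ (co cf : Fin N → ℝ),
      ∫ ω, ∑ i, (co i + cf i * (A i).indicator (fun _ => (1 : ℝ)) ω) ∂μ
      = ∑ i, (co i + cf i * π i) := by
    intro co cf
    rw [integral_finset_sum _ (fun i _ => hfint co cf i)]
    refine Finset.sum_congr rfl fun i _ => ?_
    rw [integral_add (integrable_const _) ((hint i).const_mul _),
      integral_const, integral_const_mul, hE i]
    simp
  have hpint : ∀ i j, Integrable (fun ω =>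
      (b i + a i * (A i).indicator (fun _ => (1 : ℝ)) ω)
      * (d j + c j * (A j).indicator (fun _ => (1 : ℝ)) ω)) μ := by
    intro i j
    have : (fun ω => (b i + a i * (A i).indicator (fun _ => (1:ℝ)) ω)
        * (d j + c j * (A j).indicator (fun _ => (1:ℝ)) ω))
        = fun ω => b i * d j + ((b i * c j) * (A j).indicator (fun _ => (1:ℝ)) ω
          + ((a i * d j) * (A i).indicator (fun _ => (1:ℝ)) ω
          + (a i * c j) * ((A i).indicator (fun _ => (1:ℝ)) ω
              * (A j).indicator (fun _ => (1:ℝ)) ω))) := funext fun ω => by ring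
    rw [this]
    exact (integrable_const _).add (((hint j).const_mul _).add
      (((hint i).const_mul _).add ((hint2 i j).const_mul _)))
  have hprod : ∀ i j, ∫ ω, (b i + a i * (A i).indicator (fun _ => (1 : ℝ)) ω)
      * (d j + c j * (A j).indicator (fun _ => (1 : ℝ)) ω) ∂μ
      = b i * d j + b i * c j * π j + a i * d j * π i
        + a i * c j * (if i = j then π i else π i * π j) := by
    intro i j
    have heq : (fun ω => (b i + a i * (A i).indicator (fun _ => (1:ℝ)) ω)
        * (d j + c j * (A j).indicator (fun _ => (1:ℝ)) ω))
        = fun ω => b i * d j + ((b i * c j) * (A j).indicator (fun _ => (1:ℝ)) ω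
          + ((a i * d j) * (A i).indicator (fun _ => (1:ℝ)) ω
          + (a i * c j) * ((A i).indicator (fun _ => (1:ℝ)) ω
              * (A j).indicator (fun _ => (1:ℝ)) ω))) := funext fun ω => by ring
    have I4 : Integrable (fun ω => (a i * c j) * ((A i).indicator (fun _ => (1:ℝ)) ω
        * (A j).indicator (fun _ => (1:ℝ)) ω)) μ := (hint2 i j).const_mul _
    have I34 : Integrable (fun ω => (a i * d j) * (A i).indicator (fun _ => (1:ℝ)) ω
        + (a i * c j) * ((A i).indicator (fun _ => (1:ℝ)) ω
            * (A j).indicator (fun _ => (1:ℝ)) ω)) μ := ((hint i).const_mul _).add I4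
    have I234 : Integrable (fun ω => (b i * c j) * (A j).indicator (fun _ => (1:ℝ)) ω
        + ((a i * d j) * (A i).indicator (fun _ => (1:ℝ)) ω
          + (a i * c j) * ((A i).indicator (fun _ => (1:ℝ)) ω
            * (A j).indicator (fun _ => (1:ℝ)) ω))) μ := ((hint j).const_mul _).add I34
    have h34 : ∫ ω, ((a i * d j) * (A i).indicator (fun _ => (1:ℝ)) ω
        + (a i * c j) * ((A i).indicator (fun _ => (1:ℝ)) ω
            * (A j).indicator (fun _ => (1:ℝ)) ω)) ∂μ
        = a i * d j * π i + a i * c j * (if i = j then π i else π i * π j) := by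
      rw [integral_add ((hint i).const_mul _) I4,
        integral_const_mul, integral_const_mul, hE i, hE2 i j]
    have h234 : ∫ ω, ((b i * c j) * (A j).indicator (fun _ => (1:ℝ)) ω
        + ((a i * d j) * (A i).indicator (fun _ => (1:ℝ)) ω
          + (a i * c j) * ((A i).indicator (fun _ => (1:ℝ)) ω
            * (A j).indicator (fun _ => (1:ℝ)) ω))) ∂μ
        = b i * c j * π j + (a i * d j * π i
            + a i * c j * (if i = j then π i else π i * π j)) := by
      rw [integral_add ((hint j).const_mul _) I34, h34, integral_const_mul, hE j]
    rw [heq, integral_add (integrable_const _) I234, h234, integral_const]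
    simp; ring
  have hsum2 : ∫ ω, (∑ i, (b i + a i * (A i).indicator (fun _ => (1 : ℝ)) ω))
      * (∑ i, (d i + c i * (A i).indicator (fun _ => (1 : ℝ)) ω)) ∂μ
      = ∑ i, ∑ j, (b i * d j + b i * c j * π j + a i * d j * π i
        + a i * c j * (if i = j then π i else π i * π j)) := by
    have heq : (fun ω => (∑ i, (b i + a i * (A i).indicator (fun _ => (1:ℝ)) ω))
        * (∑ i, (d i + c i * (A i).indicator (fun _ => (1:ℝ)) ω)))
        = fun ω => ∑ i, ∑ j, (b i + a i * (A i).indicator (fun _ => (1:ℝ)) ω)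
          * (d j + c j * (A j).indicator (fun _ => (1:ℝ)) ω) :=
      funext fun ω => by rw [Finset.sum_mul_sum]
    rw [heq, integral_finset_sum _ (fun i _ =>
      integrable_finset_sum _ (fun j _ => hpint i j))]
    refine Finset.sum_congr rfl fun i _ => ?_
    rw [integral_finset_sum _ (fun j _ => hpint i j)]
    exact Finset.sum_congr rfl fun j _ => hprod i j
  rw [hsum2, hsum1, hsum1, Finset.sum_mul_sum, ← Finset.sum_sub_distrib]
  refine Finset.sum_congr rfl fun i _ => ?_
  rw [← Finset.sum_sub_distrib]
  rw [show (a i * c i * (π i * (1 - π i)))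
      = ∑ j, if i = j then a i * c i * (π i * (1 - π i)) else 0 by
    simp [Finset.sum_ite_eq]]
  refine Finset.sum_congr rfl fun j _ => ?_
  by_cases h : i = j
  · subst h; simp only [eq_self_iff_true, if_true]; ring
  · simp only [if_neg h]; ring
/-- With independent assignments (events `A i`, `μ (A i) = π i ∈ (0,1)`)
and fixed residuals `es i w`, `et i w` and augmentations `ms i w`, `mt i w` at two
analysis times `s ≤ t`, the AIPW treatment-effect estimators
`Δ̂_u = ∑ i, (m_{iu}(1) + 1[Wᵢ=1]/πᵢ(1)·e_{iu}(1)) - (m_{iu}(0) + 1[Wᵢ=0]/πᵢ(0)·e_{iu}(0))`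
satisfy
`Cov(Δ̂_s, Δ̂_t) = ∑ i, e_{is}(1)e_{it}(1)/πᵢ(1) + e_{is}(0)e_{it}(0)/πᵢ(0)
  − (e_{is}(1) − e_{is}(0))(e_{it}(1) − e_{it}(0))`. -/
theorem aipw_te_covariance_formula
    {Ω : Type*} [MeasurableSpace Ω] (μ : Measure Ω) [IsProbabilityMeasure μ]
    (N : ℕ) (π : Fin N → ℝ) (hπ : ∀ i, π i ∈ Set.Ioo (0 : ℝ) 1)
    (A : Fin N → Set Ω) (hA : ∀ i, MeasurableSet (A i))
    (hAπ : ∀ i, μ (A i) = ENNReal.ofReal (π i))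
    (hindep : iIndepSet A μ)
    (es et ms mt : Fin N → Fin 2 → ℝ) :
    (∫ ω, (∑ i, ((ms i 1 + ((A i).indicator (fun _ => (1 : ℝ)) ω / π i) * es i 1)
              - (ms i 0 + ((A i)ᶜ.indicator (fun _ => (1 : ℝ)) ω / (1 - π i)) * es i 0)))
          * (∑ i, ((mt i 1 + ((A i).indicator (fun _ => (1 : ℝ)) ω / π i) * et i 1)
              - (mt i 0 + ((A i)ᶜ.indicator (fun _ => (1 : ℝ)) ω / (1 - π i)) * et i 0))) ∂μ)
      - (∫ ω, ∑ i, ((ms i 1 + ((A i).indicator (fun _ => (1 : ℝ)) ω / π i) * es i 1)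
              - (ms i 0 + ((A i)ᶜ.indicator (fun _ => (1 : ℝ)) ω / (1 - π i)) * es i 0)) ∂μ)
        * (∫ ω, ∑ i, ((mt i 1 + ((A i).indicator (fun _ => (1 : ℝ)) ω / π i) * et i 1)
              - (mt i 0 + ((A i)ᶜ.indicator (fun _ => (1 : ℝ)) ω / (1 - π i)) * et i 0)) ∂μ)
      = ∑ i, (es i 1 * et i 1 / π i + es i 0 * et i 0 / (1 - π i)
          - (es i 1 - es i 0) * (et i 1 - et i 0)) := by
  have key : ∀ (e m : Fin N → Fin 2 → ℝ) (ω : Ω) (i : Fin N),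
      ((m i 1 + ((A i).indicator (fun _ => (1 : ℝ)) ω / π i) * e i 1)
        - (m i 0 + ((A i)ᶜ.indicator (fun _ => (1 : ℝ)) ω / (1 - π i)) * e i 0))
      = (m i 1 - m i 0 - e i 0 / (1 - π i))
        + (e i 1 / π i + e i 0 / (1 - π i)) * (A i).indicator (fun _ => (1 : ℝ)) ω := by
    intro e m ω i
    by_cases h : ω ∈ A i <;>
      simp [Set.indicator_of_mem, Set.indicator_of_notMem, h] <;> ring
  simp only [key es ms, key et mt]
  rw [aux_cov μ N π hπ A hA hAπ hindep
    (fun i => es i 1 / π i + es i 0 / (1 - π i))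
    (fun i => ms i 1 - ms i 0 - es i 0 / (1 - π i))
    (fun i => et i 1 / π i + et i 0 / (1 - π i))
    (fun i => mt i 1 - mt i 0 - et i 0 / (1 - π i))]
  refine Finset.sum_congr rfl fun i _ => ?_
  have h0 : π i ≠ 0 := ne_of_gt (hπ i).1
  have h1 : (1 : ℝ) - π i ≠ 0 := sub_ne_zero.mpr (ne_of_lt (hπ i).2).symm
  field_simp
  ring
end

section
/- Fix η > 0, α ∈ (0,1), and π ∈ (0,1), and define b(V; δ) = √( ((V·η² + 1)/η²) · log((V·η² + 1)/δ²) ). Define the relative width R_π(V₀, V₁) = ( b(V₀; α/2) + b(V₁; α/2) ) / b( V₁/(1−π) + V₀/π ; α ). Then in the symmetric case V₀ = V₁ = V, R_π(V, V) → 2·√(π·(1−π)) as V → ∞. -/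
open Filter

lemma ratio_aux (c a b : ℝ) (hc : 0 < c) (ha : 0 < a) (hb : 0 < b) :
    Tendsto (fun s : ℝ => ((s + 1) * Real.log ((s + 1) / a)) /
      ((s / c + 1) * Real.log ((s / c + 1) / b))) atTop (nhds c) := by
  have hL₁ : Tendsto (fun s : ℝ => Real.log ((s + 1) / a)) atTop atTop := by
    apply Real.tendsto_log_atTop.comp
    exact (tendsto_atTop_add_const_right _ 1 tendsto_id).atTop_div_const ha
  have hf₁ : Tendsto (fun s : ℝ => (s + 1) / (s / c + 1)) atTop (nhds c) := by
    have h1 : Tendsto (fun s : ℝ => (1 + s⁻¹) / (c⁻¹ + s⁻¹)) atTop (nhds c) := by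
      have hnum : Tendsto (fun s : ℝ => (1:ℝ) + s⁻¹) atTop (nhds (1 + 0)) :=
        tendsto_const_nhds.add tendsto_inv_atTop_zero
      have hden : Tendsto (fun s : ℝ => c⁻¹ + s⁻¹) atTop (nhds (c⁻¹ + 0)) :=
        tendsto_const_nhds.add tendsto_inv_atTop_zero
      have h := hnum.div hden (by simpa using (inv_pos.mpr hc).ne')
      simp at h; exact h
    apply h1.congr'
    filter_upwards [eventually_gt_atTop (0:ℝ)] with s hs
    have h2 : s / c + 1 ≠ 0 := by positivity
    field_simp
  have h2 : Tendsto (fun s : ℝ => (s / c + 1) / (s + 1)) atTop (nhds c⁻¹) := by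
    have := (hf₁.inv₀ hc.ne')
    apply this.congr
    intro s; rw [inv_div]
  have hg : Tendsto (fun s : ℝ => Real.log ((s / c + 1) / b) - Real.log ((s + 1) / a))
      atTop (nhds (Real.log (a / (b * c)))) := by
    have hinner : Tendsto (fun s : ℝ => (s / c + 1) / (s + 1) * (a / b)) atTop
        (nhds (a / (b * c))) := by
      have h := h2.mul_const (a / b)
      have : c⁻¹ * (a / b) = a / (b * c) := by
        rw [mul_comm, ← div_eq_mul_inv, div_div]
      rwa [this] at h
    have hlog := ((Real.continuousAt_log (by positivity : (a / (b * c)) ≠ 0)).tendsto).comp hinner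
    apply hlog.congr'
    filter_upwards [eventually_gt_atTop (0:ℝ)] with s hs
    have hp1 : (0:ℝ) < (s / c + 1) / b := by positivity
    have hp2 : (0:ℝ) < (s + 1) / a := by positivity
    simp only [Function.comp]
    rw [← Real.log_div hp1.ne' hp2.ne']
    congr 1
    field_simp
  have hq : Tendsto (fun s : ℝ => (Real.log ((s / c + 1) / b) - Real.log ((s + 1) / a))
      * (Real.log ((s + 1) / a))⁻¹) atTop (nhds 0) := by
    simpa using hg.mul hL₁.inv_tendsto_atTop
  have hone : Tendsto (fun s : ℝ => (1 + (Real.log ((s / c + 1) / b)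
      - Real.log ((s + 1) / a)) * (Real.log ((s + 1) / a))⁻¹)⁻¹) atTop (nhds 1) := by
    have hc1 : Tendsto (fun _ : ℝ => (1:ℝ)) atTop (nhds 1) := tendsto_const_nhds
    have h := (hc1.add hq).inv₀ (by norm_num)
    simpa using h
  have hratio : Tendsto (fun s : ℝ => Real.log ((s + 1) / a) / Real.log ((s / c + 1) / b))
      atTop (nhds 1) := by
    apply hone.congr'
    filter_upwards [hL₁.eventually_gt_atTop 0] with s hs
    rw [show (1:ℝ) + (Real.log ((s / c + 1) / b) - Real.log ((s + 1) / a))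
        * (Real.log ((s + 1) / a))⁻¹
        = Real.log ((s / c + 1) / b) / Real.log ((s + 1) / a) from by
      field_simp; ring]
    rw [← one_div, one_div_div]
  have hfinal := hf₁.mul hratio
  rw [mul_one] at hfinal
  apply hfinal.congr
  intro s
  rw [div_mul_div_comm]

/-- Relative width of the union bound vs. the variance upper bound,
symmetric case. With `b(V; δ) = √(((V·η²+1)/η²)·log((V·η²+1)/δ²))` and
`R_p(V₀, V₁) = (b(V₀; α/2) + b(V₁; α/2)) / b(V₁/(1−p) + V₀/p; α)`,
if `V₀ = V₁ = V` then `R_p(V, V) → 2·√(p·(1−p))` as `V → ∞`. -/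
theorem relative_width_symmetric
    (η α p : ℝ) (hη : 0 < η) (hα : α ∈ Set.Ioo (0 : ℝ) 1)
    (hp : p ∈ Set.Ioo (0 : ℝ) 1)
    (b : ℝ → ℝ → ℝ)
    (hb : ∀ V δ, b V δ = Real.sqrt (((V * η ^ 2 + 1) / η ^ 2)
        * Real.log ((V * η ^ 2 + 1) / δ ^ 2))) :
    Tendsto (fun V : ℝ => (b V (α / 2) + b V (α / 2))
        / b (V / (1 - p) + V / p) α)
      atTop (nhds (2 * Real.sqrt (p * (1 - p)))) := by
  obtain ⟨hp0, hp1⟩ := hp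
  obtain ⟨hα0, hα1⟩ := hα
  have hc : 0 < p * (1 - p) := mul_pos hp0 (by linarith)
  have ha' : 0 < (α / 2) ^ 2 := by positivity
  have hb' : 0 < α ^ 2 := by positivity
  have key := ratio_aux (p * (1 - p)) ((α / 2) ^ 2) (α ^ 2) hc ha' hb'
  have hs : Tendsto (fun V : ℝ => V * η ^ 2) atTop atTop :=
    tendsto_id.atTop_mul_const (by positivity)
  have hcomp := key.comp hs
  have hfin := ((Real.continuous_sqrt.tendsto _).const_mul 2).comp hcomp
  apply hfin.congr'
  filter_upwards [eventually_gt_atTop (0:ℝ)] with V hV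
  have hη2 : (0:ℝ) < η ^ 2 := by positivity
  have h1p : (1 - p) ≠ 0 := by linarith
  have hVp : V / (1 - p) + V / p = V / (p * (1 - p)) := by
    field_simp
    ring
  have harg : (V / (1 - p) + V / p) * η ^ 2 + 1 = (V * η ^ 2) / (p * (1 - p)) + 1 := by
    rw [hVp]; ring
  set s := V * η ^ 2 with hsdef
  have hspos : 0 < s := by positivity
  have hu : (0:ℝ) < s + 1 := by linarith
  have hw : (0:ℝ) < s / (p * (1 - p)) + 1 := by positivity
  have hα2lt1 : (α / 2) ^ 2 < 1 := by nlinarith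
  have hαlt1 : α ^ 2 < 1 := by nlinarith
  have hL1pos : 0 < Real.log ((s + 1) / (α / 2) ^ 2) := by
    apply Real.log_pos
    rw [lt_div_iff₀ ha']
    nlinarith
  have hwpos : 0 < s / (p * (1 - p)) := div_pos hspos hc
  have hL2pos : 0 < Real.log ((s / (p * (1 - p)) + 1) / α ^ 2) := by
    apply Real.log_pos
    rw [lt_div_iff₀ hb']
    nlinarith
  simp only [Function.comp, hb, harg]
  rw [← hsdef]
  -- now goal: (√X + √X) / √Y = 2 * √(F s)
  have hX : (0:ℝ) ≤ (s + 1) / η ^ 2 * Real.log ((s + 1) / (α / 2) ^ 2) := by positivity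
  rw [← two_mul]
  conv_rhs => rw [mul_div_assoc, ← Real.sqrt_div hX]
  congr 2
  rw [eq_comm, div_mul_eq_mul_div, div_mul_eq_mul_div, div_div_div_comm, div_self hη2.ne', div_one]
end

section
/- Fix η > 0, α ∈ (0,1), and π ∈ (0,1), and define b(V; δ) = √( ((V·η² + 1)/η²) · log((V·η² + 1)/δ²) ). Define the relative width R_π(V₀, V₁) = ( b(V₀; α/2) + b(V₁; α/2) ) / b( V₁/(1−π) + V₀/π ; α ). Suppose (V₀(n)) and (V₁(n)) are sequences of positive reals with V₁(n) → ∞ and V₀(n)/V₁(n) → 0. Then R_π(V₀(n), V₁(n)) → √(1−π) as n → ∞; in particular the union-bound width is asymptotically strictly smaller than the variance-upper-bound width. -/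
open Filter

/-- Relative width of the union bound vs. the variance upper bound,
asymmetric case. With `b(V; δ) = √(((V·η²+1)/η²)·log((V·η²+1)/δ²))` and
`R_p(V₀, V₁) = (b(V₀; α/2) + b(V₁; α/2)) / b(V₁/(1−p) + V₀/p; α)`,
if `V₁ n → ∞` and `V₀ n / V₁ n → 0`, then `R_p(V₀ n, V₁ n) → √(1−p)`; in
particular the union-bound width is eventually strictly smaller than the
variance-upper-bound width. -/
theorem relative_width_asymmetric
    (η α p : ℝ) (hη : 0 < η) (hα : α ∈ Set.Ioo (0 : ℝ) 1)
    (hp : p ∈ Set.Ioo (0 : ℝ) 1)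
    (b : ℝ → ℝ → ℝ)
    (hb : ∀ V δ, b V δ = Real.sqrt (((V * η ^ 2 + 1) / η ^ 2)
        * Real.log ((V * η ^ 2 + 1) / δ ^ 2)))
    (V₀ V₁ : ℕ → ℝ) (hV₀ : ∀ n, 0 < V₀ n) (hV₁ : ∀ n, 0 < V₁ n)
    (hV₁top : Tendsto V₁ atTop atTop)
    (hratio : Tendsto (fun n => V₀ n / V₁ n) atTop (nhds 0)) :
    Tendsto (fun n => (b (V₀ n) (α / 2) + b (V₁ n) (α / 2))
        / b (V₁ n / (1 - p) + V₀ n / p) α)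
      atTop (nhds (Real.sqrt (1 - p))) ∧
    ∀ᶠ n in atTop,
      b (V₀ n) (α / 2) + b (V₁ n) (α / 2)
        < b (V₁ n / (1 - p) + V₀ n / p) α := by
  obtain ⟨hα0, hα1⟩ := hα
  obtain ⟨hp0, hp1⟩ := hp
  have h1p : (0:ℝ) < 1 - p := by linarith
  have hc : (0:ℝ) < η ^ 2 := by positivity
  set c := η ^ 2 with hcdef
  set W : ℕ → ℝ := fun n => V₁ n / (1 - p) + V₀ n / p with hWdef
  have hWpos : ∀ n, 0 < W n := fun n =>
    add_pos (div_pos (hV₁ n) h1p) (div_pos (hV₀ n) hp0)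
  have hα20 : (0:ℝ) < α / 2 := by linarith
  have hα21 : α / 2 < 1 := by linarith
  -- log positivity
  have hlogpos : ∀ V δ : ℝ, 0 < V → 0 < δ → δ < 1 →
      0 < Real.log ((V * c + 1) / δ ^ 2) := by
    intro V δ hV hδ hδ1
    apply Real.log_pos
    rw [lt_div_iff₀ (by positivity)]
    nlinarith [mul_pos hV hc]
  have hbpos : ∀ V δ : ℝ, 0 < V → 0 < δ → δ < 1 → 0 < b V δ := by
    intro V δ hV hδ hδ1
    rw [hb]
    exact Real.sqrt_pos.mpr (mul_pos (by positivity) (hlogpos V δ hV hδ hδ1))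
  -- W / V₁ → (1-p)⁻¹
  have hWV : Tendsto (fun n => W n / V₁ n) atTop (nhds ((1-p)⁻¹)) := by
    have key : ∀ n, W n / V₁ n = (1-p)⁻¹ + (V₀ n / V₁ n) / p := by
      intro n
      have h1 := (hV₁ n).ne'
      simp only [hWdef]
      rw [div_eq_iff h1]
      field_simp
    rw [tendsto_congr key]
    have : Tendsto (fun n => (1-p)⁻¹ + (V₀ n / V₁ n) / p) atTop
        (nhds ((1-p)⁻¹ + 0 / p)) := tendsto_const_nhds.add (hratio.div_const p)
    simpa using this
  have hinv : Tendsto (fun n => (V₁ n * c)⁻¹) atTop (nhds 0) :=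
    tendsto_inv_atTop_zero.comp (hV₁top.atTop_mul_const hc)
  -- r₁ → 1 - p
  have hr1 : Tendsto (fun n => (V₁ n * c + 1) / (W n * c + 1)) atTop (nhds (1 - p)) := by
    have key : ∀ n, (V₁ n * c + 1) / (W n * c + 1)
        = (1 + (V₁ n * c)⁻¹) / (W n / V₁ n + (V₁ n * c)⁻¹) := by
      intro n
      have h1 := (hV₁ n).ne'
      have hv := hV₁ n
      have hw := hWpos n
      have h2 : W n * c + 1 ≠ 0 := by positivity
      have h4 : W n / V₁ n + (V₁ n * c)⁻¹ ≠ 0 := by positivity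
      rw [div_eq_div_iff h2 h4]
      field_simp
      try ring
    rw [tendsto_congr key]
    have hne : (1-p)⁻¹ + 0 ≠ 0 := by
      simpa using (inv_pos.mpr h1p).ne'
    have := ((tendsto_const_nhds : Filter.Tendsto (fun _ : ℕ => (1:ℝ)) Filter.atTop (nhds 1)).add hinv).div (hWV.add hinv) hne
    simp only [add_zero, one_div, inv_inv, zero_div] at this
    exact this
  -- r₀ → 0
  have hr0 : Tendsto (fun n => (V₀ n * c + 1) / (W n * c + 1)) atTop (nhds 0) := by
    have key : ∀ n, (V₀ n * c + 1) / (W n * c + 1)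
        = (V₀ n / V₁ n + (V₁ n * c)⁻¹) / (W n / V₁ n + (V₁ n * c)⁻¹) := by
      intro n
      have h1 := (hV₁ n).ne'
      have hv := hV₁ n
      have hw := hWpos n
      have h2 : W n * c + 1 ≠ 0 := by positivity
      have h4 : W n / V₁ n + (V₁ n * c)⁻¹ ≠ 0 := by positivity
      rw [div_eq_div_iff h2 h4]
      field_simp
      try ring
    rw [tendsto_congr key]
    have hne : (1-p)⁻¹ + 0 ≠ 0 := by
      simpa using (inv_pos.mpr h1p).ne'
    have := (hratio.add hinv).div (hWV.add hinv) hne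
    simp only [add_zero, one_div, inv_inv, zero_div] at this
    exact this
  -- X, Y and log ratio
  set X : ℕ → ℝ := fun n => (V₁ n * c + 1) / (α/2) ^ 2 with hXdef
  set Y : ℕ → ℝ := fun n => (W n * c + 1) / α ^ 2 with hYdef
  have hXpos : ∀ n, 0 < X n := fun n => by
    have := hV₁ n; positivity
  have hYpos : ∀ n, 0 < Y n := fun n => by
    have := hWpos n; positivity
  have hWtop : Tendsto W atTop atTop := by
    apply tendsto_atTop_mono (fun n => ?_) (hV₁top.atTop_div_const h1p)
    exact le_add_of_nonneg_right (div_pos (hV₀ n) hp0).le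
  have hYtop : Tendsto Y atTop atTop := by
    apply Tendsto.atTop_div_const (by positivity)
    exact tendsto_atTop_add_const_right _ 1 (hWtop.atTop_mul_const hc)
  have hlogYtop : Tendsto (fun n => Real.log (Y n)) atTop atTop :=
    Real.tendsto_log_atTop.comp hYtop
  have hlogYpos : ∀ n, 0 < Real.log (Y n) := fun n => by
    have := hlogpos (W n) α (hWpos n) hα0 hα1
    simpa [hYdef] using this
  have hXY : Tendsto (fun n => X n / Y n) atTop (nhds (4 * (1 - p))) := by
    have key : ∀ n, X n / Y n = 4 * ((V₁ n * c + 1) / (W n * c + 1)) := by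
      intro n
      simp only [hXdef, hYdef]
      have h2 : W n * c + 1 ≠ 0 := by have := hWpos n; positivity
      have hα' : α ≠ 0 := hα0.ne'
      field_simp
      try ring
    rw [tendsto_congr key]
    exact hr1.const_mul 4
  have hlogratio : Tendsto (fun n => Real.log (X n) / Real.log (Y n)) atTop (nhds 1) := by
    have h4 : (4 : ℝ) * (1 - p) ≠ 0 := by positivity
    have hlogXY : Tendsto (fun n => Real.log (X n / Y n)) atTop
        (nhds (Real.log (4 * (1 - p)))) := hXY.log h4
    have h0 : Tendsto (fun n => Real.log (X n / Y n) / Real.log (Y n)) atTop (nhds 0) :=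
      hlogXY.div_atTop hlogYtop
    have key : ∀ n, Real.log (X n) / Real.log (Y n)
        = Real.log (X n / Y n) / Real.log (Y n) + 1 := by
      intro n
      rw [Real.log_div (hXpos n).ne' (hYpos n).ne', sub_div,
        div_self (hlogYpos n).ne']
      ring
    rw [tendsto_congr key]
    simpa using h0.add (tendsto_const_nhds : Tendsto (fun _ : ℕ => (1:ℝ)) atTop (nhds 1))
  -- b(V₁)/b(W) → √(1-p)
  have hb1D : Tendsto (fun n => b (V₁ n) (α/2) / b (W n) α) atTop
      (nhds (Real.sqrt (1 - p))) := by
    have key : ∀ n, b (V₁ n) (α/2) / b (W n) α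
        = Real.sqrt (((V₁ n * c + 1) / (W n * c + 1))
            * (Real.log (X n) / Real.log (Y n))) := by
      intro n
      rw [hb, hb, ← Real.sqrt_div (by
        have := hV₁ n
        have := hlogpos (V₁ n) (α/2) (hV₁ n) hα20 hα21
        positivity)]
      congr 1
      have h2 : W n * c + 1 ≠ 0 := by have := hWpos n; positivity
      have h3 := (hlogYpos n).ne'
      simp only [hXdef, hYdef]
      field_simp
      try ring
    rw [tendsto_congr key]
    have : Tendsto (fun n => ((V₁ n * c + 1) / (W n * c + 1))
        * (Real.log (X n) / Real.log (Y n))) atTop (nhds ((1 - p) * 1)) :=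
      hr1.mul hlogratio
    simpa using this.sqrt
  -- b(V₀)/b(W) → 0
  have hb0D : Tendsto (fun n => b (V₀ n) (α/2) / b (W n) α) atTop (nhds 0) := by
    have key : ∀ n, b (V₀ n) (α/2) / b (W n) α
        = Real.sqrt (((V₀ n * c + 1) / (W n * c + 1))
            * (Real.log ((V₀ n * c + 1) / (α/2)^2) / Real.log (Y n))) := by
      intro n
      rw [hb, hb, ← Real.sqrt_div (by
        have := hV₀ n
        have := hlogpos (V₀ n) (α/2) (hV₀ n) hα20 hα21
        positivity)]
      congr 1
      have h2 : W n * c + 1 ≠ 0 := by have := hWpos n; positivity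
      have h3 := (hlogYpos n).ne'
      simp only [hYdef]
      field_simp
      try ring
    rw [tendsto_congr key]
    have hle : ∀ᶠ n in atTop, V₀ n ≤ V₁ n := by
      filter_upwards [hratio.eventually (gt_mem_nhds one_pos)] with n hn
      exact ((div_lt_one (hV₁ n)).mp hn).le
    have hupper : Tendsto (fun n => ((V₀ n * c + 1) / (W n * c + 1))
        * (Real.log (X n) / Real.log (Y n))) atTop (nhds 0) := by
      simpa using hr0.mul hlogratio
    have hinner : Tendsto (fun n => ((V₀ n * c + 1) / (W n * c + 1))
        * (Real.log ((V₀ n * c + 1) / (α/2)^2) / Real.log (Y n))) atTop (nhds 0) := by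
      apply tendsto_of_tendsto_of_tendsto_of_le_of_le' tendsto_const_nhds hupper
      · filter_upwards with n
        have ha := hV₀ n
        have hl := hlogpos (V₀ n) (α/2) (hV₀ n) hα20 hα21
        have hw := hWpos n
        have hy := hlogYpos n
        positivity
      · filter_upwards [hle] with n hn
        have hr0nn : 0 ≤ (V₀ n * c + 1) / (W n * c + 1) := by
          have := hV₀ n; have := hWpos n; positivity
        have hlog : Real.log ((V₀ n * c + 1) / (α/2)^2) ≤ Real.log (X n) := by
          apply Real.log_le_log (by have := hV₀ n; positivity)
          simp only [hXdef]
          gcongr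
        gcongr
        exact (hlogYpos n).le
    simpa using hinner.sqrt
  -- sum
  have hsum : Tendsto (fun n => (b (V₀ n) (α/2) + b (V₁ n) (α/2)) / b (W n) α) atTop
      (nhds (Real.sqrt (1 - p))) := by
    have := hb0D.add hb1D
    rw [tendsto_congr (fun n => (add_div (b (V₀ n) (α/2)) (b (V₁ n) (α/2)) (b (W n) α)).symm)] at this
    simpa using this
  refine ⟨hsum, ?_⟩
  have hlt1 : Real.sqrt (1 - p) < 1 := by
    have := Real.sqrt_lt_sqrt (by linarith : (0:ℝ) ≤ 1 - p) (by linarith : 1 - p < 1)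
    simpa using this
  filter_upwards [hsum.eventually (gt_mem_nhds hlt1)] with n hn
  have hD : 0 < b (W n) α := hbpos _ _ (hWpos n) hα0 hα1
  exact (div_lt_one hD).mp hn
end
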